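/- Let F be a field of characteristic 0, G a totally ordered abelian group, and F((G)) the Hahn series field. For x ∈ F((G_{>0})) (series with support in the strictly positive part of G), the sum exp(x) := Σ_{i≥0} x^i/i! is a well-defined element of F((G_{≥0})), and exp : (F((G_{>0})), +) → (F((G))^*, ·) is an injective group homomorphism. -/

import Mathlib

open HahnSeries HahnSeries.SummableFamily Finset

noncomputable section ExpAux

variable {F : Type} [Field F] [CharZero F] {G : Type} [AddCommGroup G] [LinearOrder G] [IsOrderedAddMonoid G]

lemma aux_orderTop_pos {x : HahnSeries G F} (h : ∀ g ∈ x.support, 0 < g) :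
    0 < x.orderTop := by
  rcases eq_or_ne x 0 with rfl | hx
  · simp [orderTop_zero]
  · rw [orderTop_of_ne_zero hx]
    exact_mod_cast h _ (x.isWF_support.min_mem (support_nonempty_iff.2 hx))

lemma aux_support_pos {x : HahnSeries G F} (hx : 0 < x.orderTop) :
    ∀ g ∈ x.support, 0 < g := fun g hg => by
  have h := orderTop_le_of_coeff_ne_zero hg
  exact_mod_cast lt_of_lt_of_le hx h

lemma aux_pow_succ_support_pos {x : HahnSeries G F} (hx : 0 < x.orderTop) :
    ∀ i : ℕ, ∀ g ∈ (x ^ (i + 1)).support, 0 < g := by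
  intro i
  induction i with
  | zero => simpa using aux_support_pos hx
  | succ k ih =>
    intro g hg
    rw [pow_succ] at hg
    obtain ⟨a, ha, b, hb, rfl⟩ := support_mul_subset hg
    exact add_pos (ih a ha) (aux_support_pos hx b hb)

lemma aux_pow_support_nonneg {x : HahnSeries G F} (hx : 0 < x.orderTop) :
    ∀ i : ℕ, ∀ g ∈ (x ^ i).support, 0 ≤ g := by
  rintro (_ | i) g hg
  · rw [pow_zero] at hg
    rw [support_one, Set.mem_singleton_iff] at hg
    exact le_of_eq hg.symm
  · exact (aux_pow_succ_support_pos hx i g hg).le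

lemma aux_pow_support_gt {x : HahnSeries G F} (hx : 0 < x.orderTop) :
    ∀ i : ℕ, ∀ g ∈ (x ^ (i + 2)).support, x.order < g := by
  intro i g hg
  rw [pow_succ] at hg
  obtain ⟨a, ha, b, hb, rfl⟩ := support_mul_subset hg
  have hb' : x.order ≤ b := order_le_of_coeff_ne_zero hb
  have ha' : 0 < a := aux_pow_succ_support_pos hx i a ha
  calc x.order ≤ b := hb'
    _ < a + b := lt_add_of_pos_left b ha'

/-- The family `i ↦ x^i / i!`. -/
def expFam (x : HahnSeries G F) (hx : 0 < x.orderTop) : SummableFamily G F ℕ where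
  toFun i := (i.factorial : F)⁻¹ • x ^ i
  isPWO_iUnion_support' := (isPWO_iUnion_support_powers (zero_le_orderTop_iff.mp hx.le)).mono
    (Set.iUnion_mono fun i g hg => by
      simp only [HahnSeries.mem_support, HahnSeries.coeff_smul, smul_eq_mul] at hg ⊢
      exact right_ne_zero_of_mul hg)
  finite_co_support' g := ((SummableFamily.powers x).finite_co_support g).subset fun i hi => by
      simp only [Function.mem_support] at hi ⊢
      have : ((i.factorial : F)⁻¹ • x ^ i).coeff g ≠ 0 := hi
      rw [HahnSeries.coeff_smul, smul_eq_mul] at this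
      have h2 := right_ne_zero_of_mul this
      simpa [SummableFamily.powers, hx] using h2

lemma expFam_apply (x : HahnSeries G F) (hx : 0 < x.orderTop) (i : ℕ) :
    expFam x hx i = (i.factorial : F)⁻¹ • x ^ i := rfl

/-- The exponential of a Hahn series (junk value `0` if the order is not positive). -/
def expH' (x : HahnSeries G F) : HahnSeries G F :=
  if hx : 0 < x.orderTop then (expFam x hx).hsum else 0

lemma expH'_eq {x : HahnSeries G F} (hx : 0 < x.orderTop) :
    expH' x = (expFam x hx).hsum := dif_pos hx

lemma expH'_coeff {x : HahnSeries G F} (hx : 0 < x.orderTop) (g : G) :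
    (expH' x).coeff g = ∑ᶠ i : ℕ, (x ^ i).coeff g / (Nat.factorial i : F) := by
  rw [expH'_eq hx, coeff_hsum]
  refine finsum_congr fun i => ?_
  rw [expFam_apply, HahnSeries.coeff_smul, smul_eq_mul, div_eq_inv_mul]

lemma aux_finsum_antidiagonal (f : ℕ × ℕ → F) (hf : (Function.support f).Finite) :
    ∑ᶠ n : ℕ, ∑ ij ∈ Finset.HasAntidiagonal.antidiagonal n, f ij = ∑ᶠ ij : ℕ × ℕ, f ij := by
  classical
  set s := hf.toFinset with hs
  set t := s.image fun ij : ℕ × ℕ => ij.1 + ij.2 with ht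
  have hgsupp : (Function.support fun n => ∑ ij ∈ Finset.HasAntidiagonal.antidiagonal n, f ij) ⊆ ↑t := by
    intro n hn
    obtain ⟨ij, hij, hne⟩ := Finset.exists_ne_zero_of_sum_ne_zero hn
    exact Finset.mem_coe.2 (Finset.mem_image.2
      ⟨ij, hf.mem_toFinset.2 hne, Finset.HasAntidiagonal.mem_antidiagonal.1 hij⟩)
  rw [finsum_eq_sum_of_support_subset _ hgsupp, finsum_eq_sum f hf]
  rw [← Finset.sum_biUnion]
  · refine (Finset.sum_subset (fun ij hij => ?_) (fun ij _ hij => ?_)).symm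
    · refine Finset.mem_biUnion.2 ⟨ij.1 + ij.2, ?_, ?_⟩
      · exact Finset.mem_image.2 ⟨ij, hij, rfl⟩
      · simp [Finset.mem_antidiagonal]
    · by_contra h
      exact hij (hf.mem_toFinset.2 h)
  · intro a _ b _ hab
    refine Finset.disjoint_left.2 fun ij h1 h2 => hab ?_
    rw [← Finset.HasAntidiagonal.mem_antidiagonal.1 h1, Finset.HasAntidiagonal.mem_antidiagonal.1 h2]

lemma expH'_mul {x y : HahnSeries G F} (hx : 0 < x.orderTop) (hy : 0 < y.orderTop) :
    expH' (x + y) = expH' x * expH' y := by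
  have hxy : 0 < (x + y).orderTop :=
    lt_of_lt_of_le (lt_min hx hy) min_orderTop_le_orderTop_add
  rw [expH'_eq hx, expH'_eq hy, expH'_eq hxy]
  have hprod : (expFam x hx).hsum * (expFam y hy).hsum
      = (smul (expFam x hx) (expFam y hy)).hsum := by
    rw [smul_hsum, HahnSeries.of_symm_smul_of_eq_mul]
  rw [hprod]
  ext g
  set f : ℕ × ℕ → F := fun ij =>
    ((ij.1.factorial * ij.2.factorial : ℕ) : F)⁻¹ * (x ^ ij.1 * y ^ ij.2).coeff g with hf_def
  have hcoe : ∀ ij : ℕ × ℕ,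
      ((smul (expFam x hx) (expFam y hy)) ij).coeff g = f ij := by
    intro ij
    show ((HahnModule.of F).symm
      ((expFam x hx ij.1) • (HahnModule.of F) (expFam y hy ij.2))).coeff g = _
    rw [HahnSeries.of_symm_smul_of_eq_mul, expFam_apply, expFam_apply,
      smul_mul_smul_comm, HahnSeries.coeff_smul, smul_eq_mul]
    simp only [hf_def, Nat.cast_mul, mul_inv]
  have hfin : (Function.support f).Finite := by
    refine ((smul (expFam x hx) (expFam y hy)).finite_co_support g).subset ?_
    intro ij hij
    simp only [Function.mem_support] at hij ⊢
    rw [hcoe ij]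
    exact hij
  -- coefficient of the left side
  let φ : HahnSeries G F →+ F :=
    { toFun := fun z => z.coeff g
      map_zero' := rfl
      map_add' := fun _ _ => coeff_add }
  have key : ∀ n : ℕ, ((expFam (x + y) hxy) n).coeff g
      = ∑ ij ∈ Finset.HasAntidiagonal.antidiagonal n, f ij := by
    intro n
    rw [expFam_apply, HahnSeries.coeff_smul, smul_eq_mul, add_pow]
    have hφ : ((∑ i ∈ range (n + 1), x ^ i * y ^ (n - i) * (n.choose i : HahnSeries G F)).coeff g)
        = ∑ i ∈ range (n + 1), (n.choose i : F) * (x ^ i * y ^ (n - i)).coeff g := by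
      rw [show ((∑ i ∈ range (n + 1), x ^ i * y ^ (n - i) *
          (n.choose i : HahnSeries G F)).coeff g)
        = φ (∑ i ∈ range (n + 1), x ^ i * y ^ (n - i) * (n.choose i : HahnSeries G F)) from rfl,
        map_sum]
      refine Finset.sum_congr rfl fun i _ => ?_
      have : x ^ i * y ^ (n - i) * (n.choose i : HahnSeries G F)
          = (n.choose i) • (x ^ i * y ^ (n - i)) := by
        rw [nsmul_eq_mul, mul_comm]
      rw [this]
      show ((n.choose i) • (x ^ i * y ^ (n - i))).coeff g = _
      rw [show ((n.choose i) • (x ^ i * y ^ (n - i))).coeff g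
        = (n.choose i) • ((x ^ i * y ^ (n - i)).coeff g) from by
          rw [HahnSeries.coeff_nsmul]; rfl]
      rw [nsmul_eq_mul]
    rw [hφ, Finset.mul_sum, Finset.Nat.sum_antidiagonal_eq_sum_range_succ_mk]
    refine Finset.sum_congr rfl fun i hi => ?_
    have hi' : i ≤ n := Nat.lt_succ_iff.1 (Finset.mem_range.1 hi)
    have hfact : (n.choose i : F) * ((i.factorial * (n - i).factorial : ℕ) : F)
        = (n.factorial : F) := by
      exact_mod_cast congrArg (Nat.cast (R := F))
        (by rw [← Nat.choose_mul_factorial_mul_factorial hi']; ring)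
    have hC : (n.choose i : F) ≠ 0 := Nat.cast_ne_zero.2 (Nat.choose_pos hi').ne'
    have hfn : (n.factorial : F) ≠ 0 := Nat.cast_ne_zero.2 n.factorial_ne_zero
    have hm : ((i.factorial * (n - i).factorial : ℕ) : F) ≠ 0 :=
      Nat.cast_ne_zero.2 (Nat.mul_ne_zero i.factorial_ne_zero (n - i).factorial_ne_zero)
    have harith : (n.factorial : F)⁻¹ * (n.choose i : F)
        = ((i.factorial * (n - i).factorial : ℕ) : F)⁻¹ := by
      rw [← hfact, mul_inv, mul_right_comm, inv_mul_cancel₀ hC, one_mul]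
    simp only [hf_def]
    rw [← mul_assoc, harith]
  rw [coeff_hsum, coeff_hsum]
  calc (∑ᶠ n : ℕ, ((expFam (x + y) hxy) n).coeff g)
      = ∑ᶠ n : ℕ, ∑ ij ∈ Finset.HasAntidiagonal.antidiagonal n, f ij := finsum_congr key
    _ = ∑ᶠ ij : ℕ × ℕ, f ij := aux_finsum_antidiagonal f hfin
    _ = ∑ᶠ ij : ℕ × ℕ, ((smul (expFam x hx) (expFam y hy)) ij).coeff g :=
        (finsum_congr hcoe).symm

lemma expH'_zero : expH' (0 : HahnSeries G F) = 1 := by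
  have h0 : (0 : WithTop G) < (0 : HahnSeries G F).orderTop := by
    simp [orderTop_zero]
  ext g
  rw [expH'_coeff h0 g]
  rw [finsum_eq_single _ 0 (fun i hi => by
    rw [zero_pow hi, HahnSeries.coeff_zero, zero_div])]
  simp

lemma expH'_ne_one {x : HahnSeries G F} (hx : 0 < x.orderTop) (hne : x ≠ 0) :
    expH' x ≠ 1 := by
  intro h
  have horder : 0 < x.order := by
    rwa [← zero_lt_orderTop_iff hne]
  set g := x.order with hg
  have hcoeff : (expH' x).coeff g = x.coeff g := by
    rw [expH'_coeff hx g]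
    rw [finsum_eq_single _ 1 (fun i hi => ?_)]
    · simp
    · match i, hi with
      | 0, _ =>
        have : (1 : HahnSeries G F).coeff g = 0 := by
          rw [HahnSeries.coeff_one, if_neg horder.ne']
        simp [this, horder.ne']
      | (k + 2), _ =>
        have : (x ^ (k + 2)).coeff g = 0 := by
          by_contra hc
          exact lt_irrefl g (aux_pow_support_gt hx k g ((mem_support _ _).2 hc))
        simp [this]
  rw [h] at hcoeff
  rw [HahnSeries.coeff_one, if_neg horder.ne'] at hcoeff
  exact hne (coeff_order_eq_zero.mp hcoeff.symm)

lemma expH'_isUnit {x : HahnSeries G F} (hx : 0 < x.orderTop) : IsUnit (expH' x) := by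
  have hnx : 0 < (-x).orderTop := by rwa [orderTop_neg]
  refine IsUnit.of_mul_eq_one (expH' (-x)) ?_
  rw [← expH'_mul hx hnx, add_neg_cancel, expH'_zero]

end ExpAux

/-- For a field `F` of characteristic 0 and a totally ordered abelian group `G`, the sum
`exp(x) := Σ_{i≥0} x^i/i!` is a well-defined Hahn series (with coefficients given by the
finitely-supported sums `∑ᶠ i, coeff_g(x^i)/i!`) with support in `G_{≥0}`, for every
`x ∈ F((G_{>0}))`, and `exp` is an injective group homomorphism
`(F((G_{>0})), +) → (F((G))^*, ·)`. -/
theorem hahn_series_exp (F : Type) [Field F] [CharZero F]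
    (G : Type) [AddCommGroup G] [LinearOrder G] [IsOrderedAddMonoid G] :
    ∃ expH : HahnSeries G F → HahnSeries G F,
      (∀ x : HahnSeries G F, (∀ g ∈ x.support, 0 < g) →
        (∀ g : G, (expH x).coeff g = ∑ᶠ i : ℕ, (x ^ i).coeff g / (Nat.factorial i : F)) ∧
        (∀ g : G, {i : ℕ | (x ^ i).coeff g ≠ 0}.Finite) ∧
        (∀ g ∈ (expH x).support, 0 ≤ g) ∧
        IsUnit (expH x)) ∧
      expH 0 = 1 ∧
      (∀ x y : HahnSeries G F, (∀ g ∈ x.support, 0 < g) → (∀ g ∈ y.support, 0 < g) →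
        expH (x + y) = expH x * expH y) ∧
      (∀ x y : HahnSeries G F, (∀ g ∈ x.support, 0 < g) → (∀ g ∈ y.support, 0 < g) →
        expH x = expH y → x = y) := by
  classical
  refine ⟨expH', ?_, expH'_zero, ?_, ?_⟩
  · intro x h
    have hx : 0 < x.orderTop := aux_orderTop_pos h
    refine ⟨expH'_coeff hx, ?_, ?_, expH'_isUnit hx⟩
    · intro g
      refine ((HahnSeries.SummableFamily.powers x).finite_co_support g).subset ?_
      intro i hi
      simpa [HahnSeries.SummableFamily.powers, hx] using hi
    · intro g hg
      rw [expH'_eq hx] at hg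
      have := HahnSeries.SummableFamily.support_hsum_subset hg
      obtain ⟨S, ⟨i, rfl⟩, hgS⟩ := this
      have : g ∈ ((i.factorial : F)⁻¹ • x ^ i).support := hgS
      have hmem : g ∈ (x ^ i).support := by
        simp only [HahnSeries.mem_support, HahnSeries.coeff_smul, smul_eq_mul] at this ⊢
        exact right_ne_zero_of_mul this
      exact aux_pow_support_nonneg hx i g hmem
  · intro x y hxs hys
    exact expH'_mul (aux_orderTop_pos hxs) (aux_orderTop_pos hys)
  · intro x y hxs hys heq
    have hx : 0 < x.orderTop := aux_orderTop_pos hxs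
    have hy : 0 < y.orderTop := aux_orderTop_pos hys
    have hxy : 0 < (x - y).orderTop := by
      have hny : 0 < (-y).orderTop := by rwa [orderTop_neg]
      have := lt_of_lt_of_le (lt_min hx hny)
        (min_orderTop_le_orderTop_add (x := x) (y := -y))
      rwa [← sub_eq_add_neg] at this
    have hcalc : expH' (x - y) * expH' y = expH' y := by
      rw [← expH'_mul hxy hy, sub_add_cancel, heq]
    have hyne : expH' y ≠ 0 := (expH'_isUnit hy).ne_zero
    have h1 : expH' (x - y) = 1 := by
      have := mul_right_cancel₀ hyne (by rw [hcalc, one_mul] : expH' (x - y) * expH' y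
        = 1 * expH' y)
      exact this
    by_contra hne
    exact expH'_ne_one hxy (sub_ne_zero.2 fun h => hne h) h1
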